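/- A set Γ ⊆ [1,n] of positions of a string T of length n is a string attractor of T if and only if Γ ∩ cover(S) ≠ ∅ for every minimal substring S of T. (In particular, in the MAX-SAT encoding of the smallest string attractor problem it suffices to keep the hard clauses for minimal substrings only.) -/

import Mathlib

variable {α : Type*} [DecidableEq α]

/-- `occ T S`: the set of 1-based starting positions of occurrences of `S` in `T`,
i.e. `{ i ∈ [1, |T|-|S|+1] : T[i..i+|S|-1] = S }`. -/
def occ (T S : List α) : Finset ℕ :=
  (Finset.Icc 1 (T.length + 1 - S.length)).filter fun i =>
    (T.drop (i - 1)).take S.length = S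

/-- `cover T S`: the set of 1-based text positions covered by some occurrence of `S` in `T`. -/
def cover (T S : List α) : Finset ℕ :=
  (occ T S).biUnion fun i => Finset.Icc i (i + S.length - 1)

/-- `Γ ⊆ [1, |T|]` is a string attractor of `T`: every nonempty substring of `T`
has an occurrence covering a position of `Γ`. -/
def IsAttractor (T : List α) (Γ : Finset ℕ) : Prop :=
  Γ ⊆ Finset.Icc 1 T.length ∧
    ∀ P : List α, P ≠ [] → P <:+: T → (Γ ∩ cover T P).Nonempty

/-- `γ(T)`: the smallest size of a string attractor of `T`. -/
noncomputable def gammaSize (T : List α) : ℕ :=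
  sInf {k | ∃ Γ : Finset ℕ, IsAttractor T Γ ∧ Γ.card = k}

/-- `S` is a minimal substring of `T`: a nonempty substring of `T` all of whose proper
nonempty substrings occur strictly more often in `T` than `S` does. -/
def MinimalSubstring (T S : List α) : Prop :=
  S ≠ [] ∧ S <:+: T ∧
    ∀ R : List α, R ≠ [] → R <:+: S → R ≠ S → (occ T S).card < (occ T R).card

lemma occ_shift (T A R B : List α) {i : ℕ} (hi : i ∈ occ T (A ++ R ++ B)) :
    i + A.length ∈ occ T R := by
  simp only [occ, Finset.mem_filter, Finset.mem_Icc, List.length_append] at hi ⊢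
  obtain ⟨⟨h1, h2⟩, h3⟩ := hi
  refine ⟨⟨by omega, by omega⟩, ?_⟩
  have hidx : i + A.length - 1 = (i - 1) + A.length := by omega
  rw [hidx, ← List.drop_drop]
  have h4 : ((T.drop (i - 1)).take (A.length + R.length + B.length)).drop A.length
      = R ++ B := by
    rw [h3]
    rw [show A ++ R ++ B = A ++ (R ++ B) by simp [List.append_assoc]]
    exact List.drop_left
  rw [List.drop_take] at h4
  have h5 : A.length + R.length + B.length - A.length = R.length + B.length := by omega
  rw [h5] at h4
  calc ((T.drop (i-1)).drop A.length).take R.length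
      = (((T.drop (i-1)).drop A.length).take (R.length + B.length)).take R.length := by
        rw [List.take_take]; congr 1; omega
    _ = (R ++ B).take R.length := by rw [h4]
    _ = R := List.take_left

lemma occ_card_le (T A R B : List α) :
    (occ T (A ++ R ++ B)).card ≤ (occ T R).card :=
  Finset.card_le_card_of_injOn (· + A.length) (fun _ hi => occ_shift T A R B hi)
    (fun a _ b _ h => by simpa using h)

lemma cover_subset (T A R B : List α) (hR : R ≠ [])
    (hcard : (occ T R).card ≤ (occ T (A ++ R ++ B)).card) :
    cover T R ⊆ cover T (A ++ R ++ B) := by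
  have himg : (occ T (A ++ R ++ B)).image (· + A.length) = occ T R := by
    apply Finset.eq_of_subset_of_card_le
    · intro j hj
      simp only [Finset.mem_image] at hj
      obtain ⟨i, hi, rfl⟩ := hj
      exact occ_shift T A R B hi
    · rwa [Finset.card_image_of_injOn (fun a _ b _ h => by simpa using h)]
  have hr : 1 ≤ R.length := by
    cases R with
    | nil => exact absurd rfl hR
    | cons a l => simp
  intro x hx
  simp only [cover, Finset.mem_biUnion, Finset.mem_Icc] at hx ⊢
  obtain ⟨j, hj, hx1, hx2⟩ := hx
  rw [← himg] at hj
  simp only [Finset.mem_image] at hj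
  obtain ⟨i, hi, rfl⟩ := hj
  refine ⟨i, hi, by omega, ?_⟩
  simp only [List.length_append]
  omega

lemma exists_minimal (T : List α) (P : List α) (hP : P ≠ []) (hsub : P <:+: T) :
    ∃ S, MinimalSubstring T S ∧ cover T S ⊆ cover T P := by
  have H : ∀ n, ∀ P : List α, P.length = n → P ≠ [] → P <:+: T →
      ∃ S, MinimalSubstring T S ∧ cover T S ⊆ cover T P := by
    intro n
    induction n using Nat.strong_induction_on with
    | _ n ih =>
      intro P hlen hP hsub
      by_cases hmin : ∀ R : List α, R ≠ [] → R <:+: P → R ≠ P →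
          (occ T P).card < (occ T R).card
      · exact ⟨P, ⟨hP, hsub, hmin⟩, subset_refl _⟩
      · push_neg at hmin
        obtain ⟨R, hRne, hRP, hRneP, hcard⟩ := hmin
        obtain ⟨A, B, rfl⟩ := hRP
        have hABne : 0 < A.length + B.length := by
          by_contra h
          push_neg at h
          have hA : A = [] := List.length_eq_zero_iff.mp (by omega)
          have hB : B = [] := List.length_eq_zero_iff.mp (by omega)
          apply hRneP
          simp [hA, hB]
        have hlt : R.length < n := by
          rw [← hlen]
          simp only [List.length_append]
          omega
        have hcov : cover T R ⊆ cover T (A ++ R ++ B) :=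
          cover_subset T A R B hRne hcard
        obtain ⟨S, hS, hSsub⟩ := ih R.length hlt R rfl hRne
          (List.IsInfix.trans ⟨A, B, rfl⟩ hsub)
        exact ⟨S, hS, hSsub.trans hcov⟩
  exact H P.length P rfl hP hsub

/-- A set `Γ ⊆ [1, |T|]` is a string attractor of `T` if and only if it hits the cover of
every minimal substring of `T`. -/

theorem isAttractor_iff_forall_minimalSubstring (T : List α) (Γ : Finset ℕ)
    (hΓ : Γ ⊆ Finset.Icc 1 T.length) :
    IsAttractor T Γ ↔
      ∀ S : List α, MinimalSubstring T S → (Γ ∩ cover T S).Nonempty := by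
  constructor
  · intro h S hS
    exact h.2 S hS.1 hS.2.1
  · intro h
    refine ⟨hΓ, fun P hP hsub => ?_⟩
    obtain ⟨S, hS, hcov⟩ := exists_minimal T P hP hsub
    exact (h S hS).mono (Finset.inter_subset_inter Finset.Subset.rfl hcov)
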